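/- Consider the quadratic cost f(θ) = f(θ*) + ½(θ−θ*)ᵀH(θ−θ*) with H symmetric positive definite, and a descent direction p = Ĥ^{-1}g where g = H(θ−θ*) and Ĥ is symmetric positive definite. If the step size η > 0 satisfies Ĥ − ηH ⪰ 0, then for every α ∈ (0, 1/2) the Armijo–Goldstein condition f(θ − ηp) ≤ f(θ) − α η pᵀg holds. -/

import Mathlib

/-- for the quadratic cost `f(θ) = f* + ½⟪θ−θ*, H(θ−θ*)⟫` and the
direction `p = Ĥ⁻¹g` with `g = H(θ−θ*)`, if `Ĥ − ηH ⪰ 0` (with `η > 0`), then the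
Armijo–Goldstein condition holds for every `α ∈ (0, 1/2)`. -/
theorem stmt5 (n : ℕ)
    (H Hhat HhatInv : EuclideanSpace ℝ (Fin (n + 1)) →L[ℝ] EuclideanSpace ℝ (Fin (n + 1)))
    (hHsa : IsSelfAdjoint H)
    (hHpd : ∀ x : EuclideanSpace ℝ (Fin (n + 1)), x ≠ 0 → 0 < (inner ℝ x (H x) : ℝ))
    (hHhatsa : IsSelfAdjoint Hhat)
    (hHhatpd : ∀ x : EuclideanSpace ℝ (Fin (n + 1)), x ≠ 0 → 0 < (inner ℝ x (Hhat x) : ℝ))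
    (hinv₁ : HhatInv.comp Hhat = ContinuousLinearMap.id ℝ _)
    (hinv₂ : Hhat.comp HhatInv = ContinuousLinearMap.id ℝ _)
    (θ θstar : EuclideanSpace ℝ (Fin (n + 1))) (fstar η : ℝ)
    (hη : 0 < η)
    (hPSD : ∀ x : EuclideanSpace ℝ (Fin (n + 1)), 0 ≤ (inner ℝ x ((Hhat - η • H) x) : ℝ)) :
    ∀ α : ℝ, 0 < α → α < 1 / 2 →
      fstar + (1 / 2) * (inner ℝ ((θ - η • HhatInv (H (θ - θstar))) - θstar)
          (H ((θ - η • HhatInv (H (θ - θstar))) - θstar)) : ℝ) ≤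
        (fstar + (1 / 2) * (inner ℝ (θ - θstar) (H (θ - θstar)) : ℝ)) -
          α * η * (inner ℝ (HhatInv (H (θ - θstar))) (H (θ - θstar)) : ℝ) := by
  intro α hα hα2
  set d := θ - θstar with hd
  set p := HhatInv (H d) with hp
  have hrw : (θ - η • p) - θstar = d - η • p := by rw [hd]; abel
  rw [hrw]
  have hHp : Hhat p = H d := by
    have := congrArg (fun T => T (H d)) hinv₂
    simpa using this
  have hsym : (inner ℝ p (H d) : ℝ) = inner ℝ d (H p) := by
    rw [real_inner_comm]; exact hHsa.isSymmetric d p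
  -- quantities
  have hA : (0:ℝ) ≤ inner ℝ p (H d) := by
    rw [← hHp]
    by_cases hp0 : p = 0
    · simp [hp0]
    · exact le_of_lt (hHhatpd p hp0)
  have hB : (0:ℝ) ≤ inner ℝ p (H p) := by
    by_cases hp0 : p = 0
    · simp [hp0]
    · exact le_of_lt (hHpd p hp0)
  have hkey : η * (inner ℝ p (H p) : ℝ) ≤ inner ℝ p (H d) := by
    have := hPSD p
    simp only [ContinuousLinearMap.sub_apply, ContinuousLinearMap.smul_apply,
      inner_sub_right, inner_smul_right, hHp] at this
    linarith
  have hexp : (inner ℝ (d - η • p) (H (d - η • p)) : ℝ)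
      = inner ℝ d (H d) - 2 * η * inner ℝ p (H d) + η ^ 2 * inner ℝ p (H p) := by
    simp only [map_sub, map_smul, inner_sub_left, inner_sub_right,
      inner_smul_left, inner_smul_right, RCLike.conj_to_real]
    rw [← hsym]
    ring
  rw [hexp]
  nlinarith [mul_le_mul_of_nonneg_left hkey (le_of_lt hη),
    mul_nonneg (mul_nonneg hα.le hη.le) hA, mul_le_mul_of_nonneg_right
      (mul_le_mul_of_nonneg_right hα2.le hη.le) hA]
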